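/- For every tree variable automaton A over binary trees, there exists an equivalent homogenized tree variable automaton A' (i.e., accepting exactly the same trees under the same valuations) in which every state is either a 0-state or a 1-state but not both, and A' has at most twice as many states as A. -/
import Mathlib


/-- A tree variable automaton (TVA) over binary Λ-trees with variable set X. -/
structure TVA (L X Q : Type) where
  init : L → Set X → Q → Prop
  trans : L → Q → Q → Q → Prop
  final : Q → Prop

/-- A binary Λ-tree whose leaves are annotated by a set of variables (a valuation). -/
inductive ATree (L X : Type) where
  | leaf (l : L) (v : Set X)
  | node (l : L) (t₁ t₂ : ATree L X)

/-- `A.Reach t q` : there is a run of `A` on `t` (under the valuation carried by `t`)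
mapping the root to `q`. -/
inductive TVA.Reach {L X Q : Type} (A : TVA L X Q) : ATree L X → Q → Prop
  | leaf {l v q} : A.init l v q → TVA.Reach A (ATree.leaf l v) q
  | node {l t₁ t₂ q₁ q₂ q} : TVA.Reach A t₁ q₁ → TVA.Reach A t₂ q₂ →
      A.trans l q₁ q₂ q → TVA.Reach A (ATree.node l t₁ t₂) q

/-- The valuation carried by the tree is non-empty: some leaf has a non-empty annotation. -/
def ATree.hasNonempty {L X : Type} : ATree L X → Prop
  | ATree.leaf _ v => v.Nonempty
  | ATree.node _ t₁ t₂ => t₁.hasNonempty ∨ t₂.hasNonempty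

/-- `q` is a 0-state: reachable at the root of some tree under the empty valuation. -/
def TVA.ZeroState {L X Q : Type} (A : TVA L X Q) (q : Q) : Prop :=
  ∃ t : ATree L X, ¬ t.hasNonempty ∧ A.Reach t q

/-- `q` is a 1-state: reachable at the root of some tree under some non-empty valuation. -/
def TVA.OneState {L X Q : Type} (A : TVA L X Q) (q : Q) : Prop :=
  ∃ t : ATree L X, t.hasNonempty ∧ A.Reach t q

/-- Homogenized: every state is a 0-state or a 1-state, and no state is both. -/
def TVA.Homogenized {L X Q : Type} (A : TVA L X Q) : Prop :=
  ∀ q : Q, (A.ZeroState q ∨ A.OneState q) ∧ ¬ (A.ZeroState q ∧ A.OneState q)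

/-- `A` accepts the tree `t` (under the valuation carried by `t`). -/
def TVA.Accepts {L X Q : Type} (A : TVA L X Q) (t : ATree L X) : Prop :=
  ∃ q, A.Reach t q ∧ A.final q

/-- every TVA has an equivalent homogenized TVA with at most twice as
many states. -/

theorem stmt0 {L X Q : Type} [Fintype Q] (A : TVA L X Q) :
    ∃ (Q' : Type) (_ : Fintype Q') (A' : TVA L X Q'),
      A'.Homogenized ∧ (∀ t : ATree L X, A.Accepts t ↔ A'.Accepts t) ∧
      Fintype.card Q' ≤ 2 * Fintype.card Q := by
  classical
  set P : Q × Bool → Prop :=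
    fun p => ∃ t : ATree L X, (p.2 = true ↔ t.hasNonempty) ∧ A.Reach t p.1 with hP
  let Q' := {p : Q × Bool // P p}
  let A' : TVA L X Q' :=
    { init := fun l v s => A.init l v s.1.1 ∧ (s.1.2 = true ↔ v.Nonempty)
      trans := fun l s₁ s₂ s => A.trans l s₁.1.1 s₂.1.1 s.1.1 ∧
        (s.1.2 = true ↔ (s₁.1.2 = true ∨ s₂.1.2 = true))
      final := fun s => A.final s.1.1 }
  -- forward: runs of A' project to runs of A, and the flag tracks hasNonempty
  have fwd : ∀ t (s : Q'), A'.Reach t s →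
      A.Reach t s.1.1 ∧ (s.1.2 = true ↔ t.hasNonempty) := by
    intro t s h
    induction h with
    | leaf h => exact ⟨TVA.Reach.leaf h.1, h.2⟩
    | node h₁ h₂ h ih₁ ih₂ =>
        refine ⟨TVA.Reach.node ih₁.1 ih₂.1 h.1, ?_⟩
        simp only [ATree.hasNonempty]
        rw [h.2, ih₁.2, ih₂.2]
  -- backward: runs of A lift to runs of A'
  have bwd : ∀ t q, A.Reach t q → ∃ s : Q', s.1.1 = q ∧
      (s.1.2 = true ↔ t.hasNonempty) ∧ A'.Reach t s := by
    intro t q h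
    induction h with
    | @leaf l v q h =>
        have hb : (decide (ATree.leaf l v : ATree L X).hasNonempty = true
            ↔ (ATree.leaf l v : ATree L X).hasNonempty) := by simp
        refine ⟨⟨(q, decide (ATree.leaf l v : ATree L X).hasNonempty),
          ⟨ATree.leaf l v, hb, TVA.Reach.leaf h⟩⟩, rfl, hb, ?_⟩
        exact TVA.Reach.leaf ⟨h, hb⟩
    | @node l t₁ t₂ q₁ q₂ q h₁ h₂ h ih₁ ih₂ =>
        obtain ⟨s₁, hq₁, hb₁, hr₁⟩ := ih₁
        obtain ⟨s₂, hq₂, hb₂, hr₂⟩ := ih₂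
        have hb : (decide (ATree.node l t₁ t₂ : ATree L X).hasNonempty = true
            ↔ (ATree.node l t₁ t₂ : ATree L X).hasNonempty) := by simp
        refine ⟨⟨(q, decide (ATree.node l t₁ t₂ : ATree L X).hasNonempty),
          ⟨ATree.node l t₁ t₂, hb, TVA.Reach.node h₁ h₂ h⟩⟩, rfl, hb, ?_⟩
        refine TVA.Reach.node hr₁ hr₂ ⟨by rw [hq₁, hq₂]; exact h, ?_⟩
        rw [hb, hb₁, hb₂]
        exact Iff.rfl
  refine ⟨Q', inferInstance, A', ?_, ?_, ?_⟩
  · intro s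
    obtain ⟨t, hbt, hrt⟩ := s.2
    obtain ⟨s', hq', hb', hr'⟩ := bwd t s.1.1 hrt
    have hs' : s' = s := by
      apply Subtype.ext
      apply Prod.ext hq'
      rcases Bool.eq_false_or_eq_true s.1.2 with hb | hb <;>
        rcases Bool.eq_false_or_eq_true s'.1.2 with hb'' | hb'' <;>
        simp_all
    rw [hs'] at hr'
    constructor
    · rcases Bool.eq_false_or_eq_true s.1.2 with hb | hb
      · exact Or.inr ⟨t, hbt.mp hb, hr'⟩
      · exact Or.inl ⟨t, by simp [hb] at hbt; exact hbt, hr'⟩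

    · rintro ⟨⟨t₀, h₀, hr₀⟩, ⟨t₁', h₁, hr₁'⟩⟩
      have := (fwd _ _ hr₀).2
      have := (fwd _ _ hr₁').2
      rcases Bool.eq_false_or_eq_true s.1.2 with hb | hb <;> simp_all
  · intro t
    constructor
    · rintro ⟨q, hr, hf⟩
      obtain ⟨s, hq, _, hr'⟩ := bwd t q hr
      exact ⟨s, hr', by simpa [A', hq] using hf⟩
    · rintro ⟨s, hr, hf⟩
      exact ⟨s.1.1, (fwd t s hr).1, hf⟩
  · calc Fintype.card Q' ≤ Fintype.card (Q × Bool) := Fintype.card_subtype_le _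
      _ = 2 * Fintype.card Q := by simp [Fintype.card_prod, mul_comm]
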